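/- Let |φ₁⟩ and |φ₂⟩ be two unit vectors in a finite-dimensional Hilbert space H with ⟨φ₂|φ₁⟩ ≠ 0. Suppose U is a unitary operator on H ⊗ K such that U(|φ₁⟩ ⊗ |0⟩) = |φ₁⟩ ⊗ |a⟩ and U(|φ₂⟩ ⊗ |0⟩) = |φ₂⟩ ⊗ |b⟩ for unit vectors |a⟩, |b⟩, |0⟩ in K. Then |a⟩ = |b⟩. -/

import Mathlib

/-- The tensor product of two vectors in finite-dimensional spaces, represented on the
product index set. -/
def tens {m k : ℕ} (φ : EuclideanSpace ℂ (Fin m)) (ψ : EuclideanSpace ℂ (Fin k)) :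
    EuclideanSpace ℂ (Fin m × Fin k) :=
  WithLp.toLp 2 (fun p : Fin m × Fin k => φ p.1 * ψ p.2)

lemma inner_tens {m k : ℕ} (φ φ' : EuclideanSpace ℂ (Fin m))
    (ψ ψ' : EuclideanSpace ℂ (Fin k)) :
    (inner ℂ (tens φ ψ) (tens φ' ψ') : ℂ) = inner ℂ φ φ' * inner ℂ ψ ψ' := by
  simp only [PiLp.inner_apply, RCLike.inner_apply, Fintype.sum_prod_type, Finset.sum_mul,
    Finset.mul_sum]
  rw [Finset.sum_comm]
  exact Finset.sum_congr rfl fun j _ => Finset.sum_congr rfl fun i _ => by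
    rw [show tens φ ψ (i, j) = φ i * ψ j from rfl,
        show tens φ' ψ' (i, j) = φ' i * ψ' j from rfl, map_mul]; ring

/-- If a unitary `U` on `H ⊗ K` maps `φ₁ ⊗ |0⟩` to `φ₁ ⊗ a` and `φ₂ ⊗ |0⟩` to `φ₂ ⊗ b`
for nonorthogonal unit vectors `φ₁, φ₂`, then `a = b`. -/
theorem no_information_without_disturbance
    {dH dK : ℕ}
    (φ₁ φ₂ : EuclideanSpace ℂ (Fin dH)) (z a b : EuclideanSpace ℂ (Fin dK))
    (hφ₁ : ‖φ₁‖ = 1) (hφ₂ : ‖φ₂‖ = 1)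
    (hz : ‖z‖ = 1) (ha : ‖a‖ = 1) (hb : ‖b‖ = 1)
    (hnonorth : (inner ℂ φ₂ φ₁ : ℂ) ≠ 0)
    (U : EuclideanSpace ℂ (Fin dH × Fin dK) ≃ₗᵢ[ℂ] EuclideanSpace ℂ (Fin dH × Fin dK))
    (hU1 : U (tens φ₁ z) = tens φ₁ a)
    (hU2 : U (tens φ₂ z) = tens φ₂ b) :
    a = b := by
  have key : (inner ℂ (tens φ₂ b) (tens φ₁ a) : ℂ) = inner ℂ (tens φ₂ z) (tens φ₁ z) := by
    rw [← hU1, ← hU2, LinearIsometryEquiv.inner_map_map]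
  rw [inner_tens, inner_tens] at key
  have hzz : (inner ℂ z z : ℂ) = 1 := by
    rw [inner_self_eq_norm_sq_to_K, hz]; norm_num
  rw [hzz, mul_one] at key
  exact ((inner_eq_one_iff_of_norm_eq_one hb ha).mp
    (mul_left_cancel₀ hnonorth (key.trans (mul_one _).symm))).symm
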